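/- Fix o ∈ ℝ² and 0 < δ < 1. For points p, q on the circle of radius δ centered at o, the omitted area X(p,q) is a decreasing function of the angle ∠p o q: if p₁, q₁, p₂, q₂ all lie at distance exactly δ from o and ∠p₁ o q₁ ≤ ∠p₂ o q₂, then X(p₁,q₁) ≥ X(p₂,q₂). -/

import Mathlib

open MeasureTheory Real Set
open scoped ENNReal

noncomputable section

/-- The Euclidean plane ℝ². -/
abbrev Plane := EuclideanSpace ℝ (Fin 2)

/-- The point in the plane with Cartesian coordinates `(x, y)`. -/
def pt (x y : ℝ) : Plane := (WithLp.equiv 2 (Fin 2 → ℝ)).symm ![x, y]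

/-- `D p r` is the closed disk of radius `r` centered at `p`. -/
def D (p : Plane) (r : ℝ) : Set Plane := Metric.closedBall p r

/-- `X o q u` is the area of `D₁(o) \ (D₁(q) ∪ D₁(u))` (Lebesgue measure). -/
def X (o q u : Plane) : ℝ := (volume (D o 1 \ (D q 1 ∪ D u 1))).toReal


private lemma m0_arg_le (x : ℝ) : x ≤ max 0 x := le_max_right 0 x
private lemma m0_nonneg (x : ℝ) : 0 ≤ max 0 x := le_max_left 0 x
private lemma m0_mono {x y : ℝ} (h : x ≤ y) : max 0 x ≤ max 0 y := max_le_max le_rfl h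
private lemma m0_lip {x y : ℝ} (h : y ≤ x) : max 0 x ≤ max 0 y + (x - y) := by
  rcases le_total x 0 with hx | hx
  · rw [max_eq_left hx]; rcases le_total y 0 with hy | hy <;> simp [max_eq_left, max_eq_right, *] <;> linarith
  · rw [max_eq_right hx]; have := m0_arg_le y; linarith

lemma max0_key (a θ₁ θ₂ : ℝ) (ha0 : 0 < a) (haπ : a < π) (h1 : 0 ≤ θ₁) (h12 : θ₁ ≤ θ₂)
    (h2 : θ₂ ≤ π) :
    max 0 (-a - max (-π) (θ₂ + a - 2*π)) + (max 0 (θ₂ - a - a) + max 0 (π - (θ₂ + a)))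
    ≤ max 0 (-a - max (-π) (θ₁ + a - 2*π)) + (max 0 (θ₁ - a - a) + max 0 (π - (θ₁ + a))) := by
  rcases le_total (θ₂ + a) π with c1 | c1
  · have e2 : max (-π) (θ₂ + a - 2*π) = -π := max_eq_left (by linarith)
    have e1 : max (-π) (θ₁ + a - 2*π) = -π := max_eq_left (by linarith)
    rw [e1, e2, max_eq_right (by linarith : (0:ℝ) ≤ π - (θ₂ + a)),
      max_eq_right (by linarith : (0:ℝ) ≤ π - (θ₁ + a))]
    have l := m0_lip (show θ₁ - a - a ≤ θ₂ - a - a by linarith)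
    linarith
  · rcases le_total (θ₁ + a) π with c2 | c2
    · have e2 : max (-π) (θ₂ + a - 2*π) = θ₂ + a - 2*π := max_eq_right (by linarith)
      have e1 : max (-π) (θ₁ + a - 2*π) = -π := max_eq_left (by linarith)
      rw [e1, e2, max_eq_left (by linarith : π - (θ₂ + a) ≤ 0),
        max_eq_right (by linarith : (0:ℝ) ≤ π - (θ₁ + a))]
      have e0 : max 0 (-a - -π) = π - a := by rw [max_eq_right (by linarith : (0:ℝ) ≤ -a - -π)]; ring
      rw [e0]
      rcases le_total (θ₂ - a - a) 0 with s | s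
      · rw [max_eq_left s]
        have A : max 0 (-a - (θ₂ + a - 2*π)) ≤ max 0 (π - a) := m0_mono (by linarith)
        rw [max_eq_right (by linarith : (0:ℝ) ≤ π - a)] at A
        have := m0_nonneg (θ₁ - a - a)
        linarith
      · rw [max_eq_right s,
          max_eq_right (show (0:ℝ) ≤ -a - (θ₂ + a - 2*π) by linarith)]
        have := m0_arg_le (θ₁ - a - a)
        linarith
    · have e2 : max (-π) (θ₂ + a - 2*π) = θ₂ + a - 2*π := max_eq_right (by linarith)
      have e1 : max (-π) (θ₁ + a - 2*π) = θ₁ + a - 2*π := max_eq_right (by linarith)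
      rw [e1, e2, max_eq_left (by linarith : π - (θ₂ + a) ≤ 0),
        max_eq_left (by linarith : π - (θ₁ + a) ≤ 0)]
      rcases le_total θ₁ (2*a) with s1 | s1
      · rcases le_total θ₂ (2*a) with s2 | s2
        · rw [max_eq_left (by linarith : θ₂ - a - a ≤ 0),
            max_eq_left (by linarith : θ₁ - a - a ≤ 0)]
          have A : max 0 (-a - (θ₂ + a - 2*π)) ≤ max 0 (-a - (θ₁ + a - 2*π)) := m0_mono (by linarith)
          linarith
        · rw [max_eq_right (by linarith : (0:ℝ) ≤ θ₂ - a - a),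
            max_eq_left (by linarith : θ₁ - a - a ≤ 0),
            max_eq_right (by linarith : (0:ℝ) ≤ -a - (θ₂ + a - 2*π))]
          have := m0_arg_le (-a - (θ₁ + a - 2*π))
          linarith
      · rw [max_eq_right (by linarith : (0:ℝ) ≤ θ₂ - a - a),
          max_eq_right (by linarith : (0:ℝ) ≤ θ₁ - a - a),
          max_eq_right (by linarith : (0:ℝ) ≤ -a - (θ₂ + a - 2*π)),
          max_eq_right (by linarith : (0:ℝ) ≤ -a - (θ₁ + a - 2*π))]
        linarith


lemma cos_lt_iff_one {c x : ℝ} (hc1 : -1 < c) (hc2 : c < 1) (hx1 : -π ≤ x) (hx2 : x ≤ π) :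
    Real.cos x < c ↔ x < -Real.arccos c ∨ Real.arccos c < x := by
  have ha0 : 0 < Real.arccos c := Real.arccos_pos.2 hc2
  have haπ : Real.arccos c ≤ π := Real.arccos_le_pi c
  have hca : Real.cos (Real.arccos c) = c := Real.cos_arccos hc1.le hc2.le
  have key : ∀ y : ℝ, 0 ≤ y → y ≤ π → (Real.cos y < c ↔ Real.arccos c < y) := by
    intro y hy0 hyπ
    constructor
    · intro h
      by_contra hle
      push_neg at hle
      have := Real.cos_le_cos_of_nonneg_of_le_pi hy0 haπ hle
      rw [hca] at this; linarith
    · intro h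
      have := Real.cos_lt_cos_of_nonneg_of_le_pi (Real.arccos_nonneg c) hyπ h
      rw [hca] at this; linarith
  rcases le_total 0 x with hx0 | hx0
  · rw [key x hx0 hx2]
    exact ⟨fun h => Or.inr h, fun h => by rcases h with h | h; · linarith
                                          · exact h⟩
  · have hcx : Real.cos x = Real.cos (-x) := (Real.cos_neg x).symm
    rw [hcx, key (-x) (by linarith) (by linarith)]
    exact ⟨fun h => Or.inl (by linarith), fun h => by rcases h with h | h <;> linarith⟩

lemma cos_lt_iff_two {c x : ℝ} (hc1 : -1 < c) (hc2 : c < 1) (hx1 : -(2*π) < x) (hx2 : x ≤ π) :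
    Real.cos x < c ↔ (Real.arccos c - 2*π < x ∧ x < -Real.arccos c) ∨ Real.arccos c < x := by
  have ha0 : 0 < Real.arccos c := Real.arccos_pos.2 hc2
  have haπ : Real.arccos c < π := by
    have := Real.arccos_le_pi c
    rcases this.lt_or_eq with h | h
    · exact h
    · exfalso
      have := Real.cos_arccos hc1.le hc2.le
      rw [h, Real.cos_pi] at this; linarith
  have hπ := Real.pi_pos
  rcases lt_or_ge (-π) x with h | h
  · rw [cos_lt_iff_one hc1 hc2 h.le hx2]
    constructor
    · rintro (h' | h')
      · exact Or.inl ⟨by linarith, h'⟩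
      · exact Or.inr h'
    · rintro (⟨_, h'⟩ | h')
      · exact Or.inl h'
      · exact Or.inr h'
  · have hcos : Real.cos x = Real.cos (x + 2*π) := (Real.cos_add_two_pi x).symm
    rw [hcos, cos_lt_iff_one hc1 hc2 (by linarith) (by linarith)]
    constructor
    · rintro (h' | h')
      · linarith
      · exact Or.inl ⟨by linarith, by linarith⟩
    · rintro (⟨h1', h2'⟩ | h')
      · exact Or.inr (by linarith)
      · linarith


lemma arccos_lt_pi' {c : ℝ} (hc1 : -1 < c) : Real.arccos c < π :=
  lt_of_le_of_ne (Real.arccos_le_pi c) (fun h => absurd (Real.arccos_eq_pi.1 h) (by linarith))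

def Aset (c θ : ℝ) : Set ℝ := {φ | φ ∈ Ioo (-π) π ∧ Real.cos φ < c ∧ Real.cos (φ - θ) < c}

lemma Aset_eq {c θ : ℝ} (hc1 : -1 < c) (hc2 : c < 1) (hθ1 : 0 ≤ θ) (hθ2 : θ ≤ π) :
    Aset c θ = (Ioo (-π) (-Real.arccos c) ∪ Ioo (Real.arccos c) π) ∩
      (Ioo (θ + Real.arccos c - 2*π) (θ - Real.arccos c) ∪ Ioo (θ + Real.arccos c) π) := by
  have ha0 : 0 < Real.arccos c := Real.arccos_pos.2 hc2
  have haπ : Real.arccos c < π := arccos_lt_pi' hc1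
  have hπ := Real.pi_pos
  ext φ
  simp only [Aset, mem_setOf_eq, mem_inter_iff, mem_union, mem_Ioo]
  constructor
  · rintro ⟨⟨hφ1, hφ2⟩, hcos1, hcos2⟩
    rw [cos_lt_iff_one hc1 hc2 hφ1.le hφ2.le] at hcos1
    rw [cos_lt_iff_two hc1 hc2 (by linarith) (by linarith)] at hcos2
    constructor
    · rcases hcos1 with h | h
      · exact Or.inl ⟨hφ1, h⟩
      · exact Or.inr ⟨h, hφ2⟩
    · rcases hcos2 with ⟨h1, h2⟩ | h
      · exact Or.inl ⟨by linarith, by linarith⟩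
      · exact Or.inr ⟨by linarith, hφ2⟩
  · rintro ⟨hI, hJ⟩
    have hφ1 : -π < φ := by rcases hI with ⟨h, _⟩ | ⟨h, _⟩ <;> linarith
    have hφ2 : φ < π := by rcases hI with ⟨_, h⟩ | ⟨_, h⟩ <;> linarith
    refine ⟨⟨hφ1, hφ2⟩, ?_, ?_⟩
    · rw [cos_lt_iff_one hc1 hc2 hφ1.le hφ2.le]
      rcases hI with ⟨_, h⟩ | ⟨h, _⟩
      · exact Or.inl h
      · exact Or.inr h
    · rw [cos_lt_iff_two hc1 hc2 (by linarith) (by linarith)]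
      rcases hJ with ⟨h1, h2⟩ | ⟨h1, h2⟩
      · exact Or.inl ⟨by linarith, by linarith⟩
      · exact Or.inr (by linarith)

lemma Aset_vol {c θ : ℝ} (hc1 : -1 < c) (hc2 : c < 1) (hθ1 : 0 ≤ θ) (hθ2 : θ ≤ π) :
    volume (Aset c θ) =
      ENNReal.ofReal (-Real.arccos c - max (-π) (θ + Real.arccos c - 2*π)) +
      (ENNReal.ofReal (θ - Real.arccos c - Real.arccos c) +
        ENNReal.ofReal (π - (θ + Real.arccos c))) := by
  have ha0 : 0 < Real.arccos c := Real.arccos_pos.2 hc2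
  have haπ : Real.arccos c < π := arccos_lt_pi' hc1
  have hπ := Real.pi_pos
  set a := Real.arccos c with ha
  have hI1J1 : Ioo (-π) (-a) ∩ Ioo (θ+a-2*π) (θ-a) = Ioo (max (-π) (θ+a-2*π)) (-a) := by
    rw [Set.Ioo_inter_Ioo, min_eq_left (by linarith : -a ≤ θ-a)]
  have hI1J2 : Ioo (-π) (-a) ∩ Ioo (θ+a) π = ∅ := by
    rw [Set.Ioo_inter_Ioo, min_eq_left (by linarith : -a ≤ π),
      max_eq_right (by linarith : -π ≤ θ+a)]
    exact Ioo_eq_empty (by linarith)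
  have hI2J1 : Ioo a π ∩ Ioo (θ+a-2*π) (θ-a) = Ioo a (θ-a) := by
    rw [Set.Ioo_inter_Ioo, max_eq_left (by linarith : θ+a-2*π ≤ a),
      min_eq_right (by linarith : θ-a ≤ π)]
  have hI2J2 : Ioo a π ∩ Ioo (θ+a) π = Ioo (θ+a) π := by
    rw [Set.Ioo_inter_Ioo, max_eq_right (by linarith : a ≤ θ+a), min_self]
  rw [Aset_eq hc1 hc2 hθ1 hθ2, union_inter_distrib_right, inter_union_distrib_left,
    inter_union_distrib_left, hI1J1, hI1J2, hI2J1, hI2J2, union_empty]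
  have d1 : Disjoint (Ioo (max (-π) (θ+a-2*π)) (-a)) (Ioo a (θ-a) ∪ Ioo (θ+a) π) := by
    rw [Set.disjoint_union_right]
    constructor <;>
    · rw [Set.Ioo_disjoint_Ioo]
      exact le_trans (min_le_left _ _) (le_trans (by linarith) (le_max_right _ _))
  have d2 : Disjoint (Ioo a (θ-a)) (Ioo (θ+a) π) := by
    rw [Set.Ioo_disjoint_Ioo]
    exact le_trans (min_le_left _ _) (le_trans (by linarith) (le_max_right _ _))
  rw [measure_union d1 (measurableSet_Ioo.union measurableSet_Ioo),
    measure_union d2 measurableSet_Ioo, Real.volume_Ioo, Real.volume_Ioo, Real.volume_Ioo]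

lemma ofReal_eq_ofReal_max0 (x : ℝ) : ENNReal.ofReal x = ENNReal.ofReal (max 0 x) := by
  rcases le_total 0 x with h | h
  · rw [max_eq_right h]
  · rw [max_eq_left h, ENNReal.ofReal_of_nonpos h, ENNReal.ofReal_zero]

lemma Aset_mono (c : ℝ) {θ₁ θ₂ : ℝ} (h1 : 0 ≤ θ₁) (h12 : θ₁ ≤ θ₂) (h2 : θ₂ ≤ π) :
    volume (Aset c θ₂) ≤ volume (Aset c θ₁) := by
  have hπ := Real.pi_pos
  rcases le_or_gt c (-1) with hc1 | hc1
  · have he : Aset c θ₂ = ∅ := by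
      ext φ
      simp only [Aset, mem_setOf_eq, mem_empty_iff_false, iff_false, not_and]
      intro _ h
      exact absurd (lt_of_lt_of_le h hc1) (not_lt.2 (Real.neg_one_le_cos φ))
    rw [he]
    simp
  rcases le_or_gt 1 c with hc2 | hc2
  · have key : ∀ θ : ℝ, 0 ≤ θ → θ ≤ π → volume (Aset c θ) = ENNReal.ofReal (2*π) := by
      intro θ hθ1 hθ2
      have h2π : π - -π = 2*π := by ring
      apply le_antisymm
      · calc volume (Aset c θ) ≤ volume (Ioo (-π) π) := measure_mono (fun φ hφ => hφ.1)
          _ = ENNReal.ofReal (2*π) := by rw [Real.volume_Ioo, h2π]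
      · have hnull : volume ({0, θ} : Set ℝ) = 0 :=
          measure_mono_null (by intro x hx; exact hx) (Set.Finite.measure_zero (by simp) _)
        calc ENNReal.ofReal (2*π) = volume (Ioo (-π) π \ {0, θ}) := by
              rw [measure_diff_null hnull, Real.volume_Ioo, h2π]
          _ ≤ volume (Aset c θ) := by
              apply measure_mono
              rintro φ ⟨⟨hφ1, hφ2⟩, hφ3⟩
              simp only [mem_insert_iff, mem_singleton_iff, not_or] at hφ3
              have key2 : ∀ x : ℝ, -(2*π) < x → x < 2*π → x ≠ 0 → Real.cos x < c := by
                intro x hx1 hx2 hx0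
                refine lt_of_lt_of_le (lt_of_le_of_ne (Real.cos_le_one x) ?_) hc2
                intro h
                exact hx0 ((Real.cos_eq_one_iff_of_lt_of_lt hx1 hx2).1 h)
              exact ⟨⟨hφ1, hφ2⟩, key2 φ (by linarith) (by linarith) hφ3.1,
                key2 (φ - θ) (by linarith) (by linarith) (by intro h; exact hφ3.2 (by linarith))⟩
    rw [key θ₁ h1 (le_trans h12 h2), key θ₂ (le_trans h1 h12) h2]
  · -- -1 < c < 1
    rw [Aset_vol hc1 hc2 h1 (le_trans h12 h2), Aset_vol hc1 hc2 (le_trans h1 h12) h2,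
      ofReal_eq_ofReal_max0 (-Real.arccos c - _), ofReal_eq_ofReal_max0 (θ₂ - _ - _),
      ofReal_eq_ofReal_max0 (π - (θ₂ + _)),
      ofReal_eq_ofReal_max0 (-Real.arccos c - max (-π) (θ₁ + Real.arccos c - 2*π)),
      ofReal_eq_ofReal_max0 (θ₁ - _ - _), ofReal_eq_ofReal_max0 (π - (θ₁ + _)),
      ← ENNReal.ofReal_add (le_max_left _ _) (le_max_left _ _),
      ← ENNReal.ofReal_add (le_max_left _ _) (add_nonneg (le_max_left _ _) (le_max_left _ _)),
      ← ENNReal.ofReal_add (le_max_left _ _) (le_max_left _ _),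
      ← ENNReal.ofReal_add (le_max_left _ _) (add_nonneg (le_max_left _ _) (le_max_left _ _))]
    exact ENNReal.ofReal_le_ofReal
      (max0_key (Real.arccos c) θ₁ θ₂ (Real.arccos_pos.2 hc2) (arccos_lt_pi' hc1) h1 h12 h2)





def Gset (δ θ : ℝ) : Set ℂ :=
  Metric.closedBall 0 1 \
    (Metric.closedBall (δ : ℂ) 1 ∪ Metric.closedBall ((δ : ℂ) * Complex.exp (θ * Complex.I)) 1)

lemma Gset_measurable (δ θ : ℝ) : MeasurableSet (Gset δ θ) :=
  measurableSet_closedBall.diff (measurableSet_closedBall.union measurableSet_closedBall)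

lemma dist_polar_sq (δ ψ r φ : ℝ) :
    (dist (Complex.polarCoord.symm (r, φ)) ((δ : ℂ) * Complex.exp (ψ * Complex.I))) ^ 2
      = r^2 + δ^2 - 2*r*δ*Real.cos (φ - ψ) := by
  rw [Complex.dist_eq, Complex.sq_norm, Complex.polarCoord_symm_apply]
  rw [Complex.exp_mul_I]
  rw [Complex.normSq_apply]
  simp only [Complex.sub_re, Complex.sub_im, Complex.mul_re, Complex.mul_im, Complex.add_re,
    Complex.add_im, Complex.ofReal_re, Complex.ofReal_im, Complex.cos_ofReal_re,
    Complex.cos_ofReal_im, Complex.sin_ofReal_re, Complex.sin_ofReal_im, Complex.I_re,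
    Complex.I_im, Complex.ofReal_cos, Complex.ofReal_sin]
  rw [Real.cos_sub]
  ring_nf
  nlinarith [Real.sin_sq_add_cos_sq φ, Real.sin_sq_add_cos_sq ψ, Real.sin_sq_add_cos_sq (φ - ψ)]

lemma one_lt_dist_iff (δ ψ r φ : ℝ) (hδ : 0 < δ) (hr : 0 < r) :
    1 < dist (Complex.polarCoord.symm (r, φ)) ((δ : ℂ) * Complex.exp (ψ * Complex.I)) ↔
      Real.cos (φ - ψ) < (r^2 + δ^2 - 1) / (2*r*δ) := by
  rw [lt_div_iff₀ (by positivity : (0:ℝ) < 2*r*δ)]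
  rw [← one_lt_pow_iff_of_nonneg dist_nonneg (two_ne_zero), dist_polar_sq]
  constructor <;> intro h <;> nlinarith

lemma mem_Gset_polar_iff {δ θ r φ : ℝ} (hδ : 0 < δ) (hr : 0 < r) :
    Complex.polarCoord.symm (r, φ) ∈ Gset δ θ ↔
      (r ≤ 1 ∧ Real.cos φ < (r^2 + δ^2 - 1) / (2*r*δ) ∧
        Real.cos (φ - θ) < (r^2 + δ^2 - 1) / (2*r*δ)) := by
  have habs : dist (Complex.polarCoord.symm (r, φ)) 0 = r := by
    rw [Complex.dist_eq, sub_zero, Complex.norm_polarCoord_symm, abs_of_pos hr]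
  have hδ0 : ((δ:ℝ) : ℂ) = (δ : ℂ) * Complex.exp ((0:ℝ) * Complex.I) := by
    simp
  rw [Gset, mem_diff, mem_union, Metric.mem_closedBall, Metric.mem_closedBall,
    Metric.mem_closedBall, habs, not_or, not_le, not_le,
    one_lt_dist_iff δ θ r φ hδ hr, hδ0, one_lt_dist_iff δ 0 r φ hδ hr, sub_zero]



lemma hsymm_meas : Measurable (fun p : ℝ × ℝ => Complex.polarCoord.symm p) := by
  have h : (fun p : ℝ × ℝ => Complex.polarCoord.symm p)
      = fun p : ℝ × ℝ => (p.1 : ℂ) * (Real.cos p.2 + Real.sin p.2 * Complex.I) := by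
    funext p; rw [Complex.polarCoord_symm_apply]
  rw [h]; fun_prop

lemma Gvol_aux {δ : ℝ} (hδ : 0 < δ) (θ : ℝ) :
    (volume (Gset δ θ)).toReal
      = (∫ r in Ioi (0:ℝ),
          r * (volume ({φ | Complex.polarCoord.symm (r, φ) ∈ Gset δ θ} ∩ Ioo (-π) π)).toReal)
    ∧ IntegrableOn
        (fun r => r * (volume ({φ | Complex.polarCoord.symm (r, φ) ∈ Gset δ θ} ∩ Ioo (-π) π)).toReal)
        (Ioi (0:ℝ)) := by
  have hπ := Real.pi_pos
  set F : ℝ × ℝ → ℝ :=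
    fun p => p.1 • (Gset δ θ).indicator (fun _ => (1:ℝ)) (Complex.polarCoord.symm p) with hF
  -- measurability of F
  have hFmeas : Measurable F := by
    apply Measurable.smul measurable_fst
    exact (measurable_const.indicator (Gset_measurable δ θ)).comp hsymm_meas
  -- integrability of F on the target
  have hFint : IntegrableOn F Complex.polarCoord.target volume := by
    set B : Set (ℝ × ℝ) := Ioc (0:ℝ) 1 ×ˢ Ioo (-π) π with hB
    have hBmeas : MeasurableSet B := measurableSet_Ioc.prod measurableSet_Ioo
    have hBint : IntegrableOn (B.indicator (fun _ => (1:ℝ))) Complex.polarCoord.target volume := by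
      rw [IntegrableOn, integrable_indicator_iff hBmeas]
      refine integrableOn_const (ne_of_lt ?_)
      calc (volume.restrict Complex.polarCoord.target) B ≤ volume B := Measure.restrict_apply_le _ _
        _ = volume (Ioc (0:ℝ) 1) * volume (Ioo (-π) π) := by
            rw [hB, Measure.volume_eq_prod, Measure.prod_prod]
        _ < ⊤ := by
            rw [Real.volume_Ioc, Real.volume_Ioo]
            exact ENNReal.mul_lt_top ENNReal.ofReal_lt_top ENNReal.ofReal_lt_top
    apply Integrable.mono' hBint hFmeas.aestronglyMeasurable.restrict
    rw [ae_restrict_iff' Complex.polarCoord.open_target.measurableSet]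
    apply ae_of_all
    intro p hp
    rw [Complex.polarCoord_target] at hp
    obtain ⟨hp1, hp2⟩ := hp
    by_cases hmem : Complex.polarCoord.symm p ∈ Gset δ θ
    · have hle : p.1 ≤ 1 := by
        have h1 : dist (Complex.polarCoord.symm p) 0 ≤ 1 := Metric.mem_closedBall.1 hmem.1
        rw [Complex.dist_eq, sub_zero, Complex.norm_polarCoord_symm,
          abs_of_pos (mem_Ioi.1 hp1)] at h1
        exact h1
      have : B.indicator (fun _ => (1:ℝ)) p = 1 :=
        Set.indicator_of_mem (by exact ⟨⟨mem_Ioi.1 hp1, hle⟩, hp2⟩) _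
      rw [this, hF]
      simp only [smul_eq_mul, Set.indicator_of_mem hmem, mul_one]
      rw [Real.norm_eq_abs, abs_of_pos (mem_Ioi.1 hp1)]
      exact hle
    · rw [hF]
      simp only [smul_eq_mul, Set.indicator_of_notMem hmem, mul_zero, norm_zero]
      exact Set.indicator_nonneg (fun _ _ => one_pos.le) p
  -- restrict of target as product measure
  have htarget : (volume : Measure (ℝ × ℝ)).restrict Complex.polarCoord.target
      = ((volume.restrict (Ioi (0:ℝ))).prod (volume.restrict (Ioo (-π) π))) := by
    rw [Complex.polarCoord_target, Measure.volume_eq_prod, ← Measure.prod_restrict]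
  have hFint' : Integrable F ((volume.restrict (Ioi (0:ℝ))).prod (volume.restrict (Ioo (-π) π))) := by
    rw [← htarget]; exact hFint
  -- inner integral computation for r > 0
  have hinner : ∀ r : ℝ, 0 < r →
      (∫ φ in Ioo (-π) π, F (r, φ))
        = r * (volume ({φ | Complex.polarCoord.symm (r, φ) ∈ Gset δ θ} ∩ Ioo (-π) π)).toReal := by
    intro r hr
    have hTmeas : MeasurableSet {φ : ℝ | Complex.polarCoord.symm (r, φ) ∈ Gset δ θ} := by
      exact (hsymm_meas.comp (measurable_const.prodMk measurable_id)) (Gset_measurable δ θ)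
    have hind : (fun φ : ℝ => (Gset δ θ).indicator (fun _ => (1:ℝ)) (Complex.polarCoord.symm (r, φ)))
        = ({φ : ℝ | Complex.polarCoord.symm (r, φ) ∈ Gset δ θ}).indicator (fun _ => (1:ℝ)) := by
      funext φ
      by_cases h : Complex.polarCoord.symm (r, φ) ∈ Gset δ θ
      · rw [Set.indicator_of_mem h, Set.indicator_of_mem (by exact h)]
      · rw [Set.indicator_of_notMem h, Set.indicator_of_notMem (by exact h)]
    calc (∫ φ in Ioo (-π) π, F (r, φ))
        = ∫ φ in Ioo (-π) π,
            r • (Gset δ θ).indicator (fun _ => (1:ℝ)) (Complex.polarCoord.symm (r, φ)) := rfl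
      _ = r • ∫ φ in Ioo (-π) π,
            (Gset δ θ).indicator (fun _ => (1:ℝ)) (Complex.polarCoord.symm (r, φ)) :=
          integral_smul r _
      _ = r • ((volume.restrict (Ioo (-π) π)) {φ | Complex.polarCoord.symm (r, φ) ∈ Gset δ θ}).toReal := by
          rw [hind]
          rw [integral_indicator_const (1:ℝ) hTmeas, smul_eq_mul, smul_eq_mul, smul_eq_mul, mul_one, measureReal_def]
      _ = r * (volume ({φ | Complex.polarCoord.symm (r, φ) ∈ Gset δ θ} ∩ Ioo (-π) π)).toReal := by
          rw [Measure.restrict_apply hTmeas, smul_eq_mul]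
  constructor
  · calc (volume (Gset δ θ)).toReal
        = ∫ z : ℂ, (Gset δ θ).indicator (fun _ => (1:ℝ)) z := by
          rw [integral_indicator_const (1:ℝ) (Gset_measurable δ θ), smul_eq_mul, mul_one, measureReal_def]
      _ = ∫ p in Complex.polarCoord.target, F p := (Complex.integral_comp_polarCoord_symm _).symm
      _ = ∫ r in Ioi (0:ℝ), ∫ φ in Ioo (-π) π, F (r, φ) := by
          rw [htarget]
          exact integral_prod F hFint'
      _ = ∫ r in Ioi (0:ℝ),
            r * (volume ({φ | Complex.polarCoord.symm (r, φ) ∈ Gset δ θ} ∩ Ioo (-π) π)).toReal := by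
          apply setIntegral_congr_fun measurableSet_Ioi
          intro r hr
          exact hinner r (mem_Ioi.1 hr)
  · have hout : Integrable (fun r => ∫ φ in Ioo (-π) π, F (r, φ)) (volume.restrict (Ioi (0:ℝ))) :=
      hFint'.integral_prod_left
    apply hout.congr
    rw [Filter.eventuallyEq_iff_exists_mem]
    refine ⟨Ioi 0, self_mem_ae_restrict measurableSet_Ioi, fun r hr => hinner r (mem_Ioi.1 hr)⟩



lemma Gvol_mono {δ : ℝ} (hδ : 0 < δ) {θ₁ θ₂ : ℝ} (h1 : 0 ≤ θ₁) (h12 : θ₁ ≤ θ₂) (h2 : θ₂ ≤ π) :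
    volume (Gset δ θ₂) ≤ volume (Gset δ θ₁) := by
  have fin : ∀ θ, volume (Gset δ θ) ≠ ⊤ := fun θ =>
    ((measure_mono diff_subset).trans_lt
      ((isCompact_closedBall (0:ℂ) 1).measure_lt_top)).ne
  rw [← ENNReal.toReal_le_toReal (fin θ₂) (fin θ₁)]
  obtain ⟨e2, i2⟩ := Gvol_aux hδ θ₂
  obtain ⟨e1, i1⟩ := Gvol_aux hδ θ₁
  rw [e1, e2]
  apply setIntegral_mono_on i2 i1 measurableSet_Ioi
  intro r hr
  have hr0 : 0 < r := mem_Ioi.1 hr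
  have hset : ∀ θ : ℝ, {φ | Complex.polarCoord.symm (r, φ) ∈ Gset δ θ} ∩ Ioo (-π) π
      = if r ≤ 1 then Aset ((r^2 + δ^2 - 1)/(2*r*δ)) θ else ∅ := by
    intro θ
    split_ifs with h
    · ext φ
      simp only [mem_inter_iff, mem_setOf_eq]
      rw [mem_Gset_polar_iff hδ hr0]
      constructor
      · rintro ⟨⟨_, hc1, hc2⟩, hφ⟩
        exact ⟨hφ, hc1, hc2⟩
      · rintro ⟨hφ, hc1, hc2⟩
        exact ⟨⟨h, hc1, hc2⟩, hφ⟩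
    · ext φ
      simp only [mem_inter_iff, mem_setOf_eq, mem_empty_iff_false, iff_false, not_and]
      rw [mem_Gset_polar_iff hδ hr0]
      rintro ⟨hle, _⟩ _
      exact h hle
  rw [hset θ₁, hset θ₂]
  split_ifs with h
  · apply mul_le_mul_of_nonneg_left _ hr0.le
    have finA : ∀ θ : ℝ, volume (Aset ((r^2+δ^2-1)/(2*r*δ)) θ) ≠ ⊤ := fun θ =>
      ((measure_mono (fun φ hφ => hφ.1)).trans_lt
        (by rw [Real.volume_Ioo]; exact ENNReal.ofReal_lt_top)).ne
    exact (ENNReal.toReal_le_toReal (finA θ₂) (finA θ₁)).2 (Aset_mono _ h1 h12 h2)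
  · exact le_refl _




lemma angle_zero_eq (x y : ℂ) :
    EuclideanGeometry.angle x 0 y = InnerProductGeometry.angle x y := by
  rw [EuclideanGeometry.angle, vsub_eq_sub, vsub_eq_sub, sub_zero, sub_zero]

lemma exp_theta_re (δ θ : ℝ) : ((δ : ℂ) * Complex.exp ((θ : ℝ) * Complex.I)).re
    = δ * Real.cos θ := by
  rw [Complex.exp_mul_I]
  simp [Complex.mul_re, Complex.add_re, Complex.cos_ofReal_re, Complex.sin_ofReal_re,
    Complex.cos_ofReal_im, Complex.sin_ofReal_im]

lemma exp_theta_im (δ θ : ℝ) : ((δ : ℂ) * Complex.exp ((θ : ℝ) * Complex.I)).im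
    = δ * Real.sin θ := by
  rw [Complex.exp_mul_I]
  simp [Complex.mul_im, Complex.add_im, Complex.cos_ofReal_re, Complex.sin_ofReal_re,
    Complex.cos_ofReal_im, Complex.sin_ofReal_im]

lemma exists_lie {δ : ℝ} (hδ : 0 < δ) {p q : ℂ} (hp : ‖p‖ = δ)
    (hq : ‖q‖ = δ) :
    ∃ f : ℂ ≃ₗᵢ[ℝ] ℂ, f p = (δ : ℂ) ∧
      f q = (δ : ℂ) * Complex.exp ((EuclideanGeometry.angle p 0 q : ℝ) * Complex.I) := by
  set θ := EuclideanGeometry.angle p 0 q with hθ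
  have hθ0 : 0 ≤ θ := EuclideanGeometry.angle_nonneg _ _ _
  have hθπ : θ ≤ π := EuclideanGeometry.angle_le_pi _ _ _
  have hnp : ‖p‖ = δ := by rw [hp]
  have hu : ‖(starRingEnd ℂ) p / (δ : ℂ)‖ = 1 := by
    rw [norm_div, Complex.norm_conj, hp,
      Complex.norm_real, Real.norm_eq_abs, abs_of_pos hδ, div_self hδ.ne']
  set u : Circle := ⟨(starRingEnd ℂ) p / (δ : ℂ), mem_sphere_zero_iff_norm.2 hu⟩ with huu
  have hup : (rotation u) p = (δ : ℂ) := by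
    rw [rotation_apply]
    show ((starRingEnd ℂ) p / (δ : ℂ)) * p = (δ : ℂ)
    rw [div_mul_eq_mul_div, Complex.conj_mul', hnp, sq, mul_div_assoc,
      div_self (Complex.ofReal_ne_zero.2 hδ.ne'), mul_one]
  set q' : ℂ := (rotation u) q with hq'def
  have habsq' : ‖q'‖ = δ := by
    rw [hq'def, rotation_apply]
    show ‖((starRingEnd ℂ) p / (δ : ℂ)) * q‖ = δ
    rw [norm_mul]
    have h1 : ‖(starRingEnd ℂ) p / (δ : ℂ)‖ = 1 := by
      exact hu
    rw [h1, one_mul, hq]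
  have hangle' : InnerProductGeometry.angle (δ : ℂ) q' = θ := by
    rw [← hup, hq'def, hθ, angle_zero_eq]
    exact (rotation u).toLinearIsometry.angle_map p q
  have hnormδ : ‖(δ : ℂ)‖ = δ := by
    rw [Complex.norm_real, Real.norm_eq_abs, abs_of_pos hδ]
  have hnormq' : ‖q'‖ = δ := by rw [habsq']
  have hcos : Real.cos θ = q'.re / δ := by
    rw [← hangle', InnerProductGeometry.cos_angle, Complex.inner, hnormδ, hnormq',
      Complex.conj_ofReal, Complex.mul_re, Complex.ofReal_re, Complex.ofReal_im, mul_zero,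
      sub_zero]
    field_simp
  have hre : q'.re = δ * Real.cos θ := by
    rw [hcos]; field_simp
  have hsq : q'.re ^ 2 + q'.im ^ 2 = δ ^ 2 := by
    have h2 := Complex.sq_norm q'
    rw [habsq', Complex.normSq_apply] at h2
    nlinarith
  have hcs := Real.sin_sq_add_cos_sq θ
  have h1 : q'.im ^ 2 = (δ * Real.sin θ) ^ 2 := by
    linear_combination hsq - (q'.re + δ * Real.cos θ) * hre - δ^2 * hcs
  rcases sq_eq_sq_iff_eq_or_eq_neg.1 h1 with him | him
  · refine ⟨rotation u, hup, ?_⟩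
    rw [← hq'def]
    apply Complex.ext
    · rw [exp_theta_re, hre]
    · rw [exp_theta_im, him]
  · refine ⟨(rotation u).trans Complex.conjLIE, ?_, ?_⟩
    · rw [LinearIsometryEquiv.trans_apply, hup, Complex.conjLIE_apply, Complex.conj_ofReal]
    · rw [LinearIsometryEquiv.trans_apply, ← hq'def, Complex.conjLIE_apply]
      apply Complex.ext
      · rw [Complex.conj_re, exp_theta_re, hre]
      · rw [Complex.conj_im, exp_theta_im, him]; ring

-- preimage of closed ball under a linear isometry equiv (as plain function identity)
lemma lie_preimage_closedBall {E F : Type*} [NormedAddCommGroup E] [NormedAddCommGroup F]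
    [InnerProductSpace ℝ E] [InnerProductSpace ℝ F] (f : E ≃ₗᵢ[ℝ] F) (x : E) (r : ℝ) :
    f ⁻¹' (Metric.closedBall (f x) r) = Metric.closedBall x r := by
  ext z
  simp only [mem_preimage, Metric.mem_closedBall]
  rw [f.dist_map]

-- the ℂ-side canonicalization
lemma cvol_eq {δ : ℝ} (hδ : 0 < δ) {p q : ℂ} (hp : ‖p‖ = δ) (hq : ‖q‖ = δ) :
    volume (Metric.closedBall (0:ℂ) 1 \ (Metric.closedBall p 1 ∪ Metric.closedBall q 1))
      = volume (Gset δ (EuclideanGeometry.angle p 0 q)) := by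
  obtain ⟨f, hfp, hfq⟩ := exists_lie hδ hp hq
  have hpre : f ⁻¹' (Gset δ (EuclideanGeometry.angle p 0 q))
      = Metric.closedBall (0:ℂ) 1 \ (Metric.closedBall p 1 ∪ Metric.closedBall q 1) := by
    ext z
    simp only [Gset, mem_diff, mem_union, mem_preimage, Metric.mem_closedBall]
    have hd0 : dist (f z) 0 = dist z 0 := by
      conv_lhs => rw [← map_zero f]
      rw [f.dist_map]
    have hd1 : dist (f z) ((δ:ℝ):ℂ) = dist z p := by rw [← hfp, f.dist_map]
    have hd2 : dist (f z) ((δ:ℂ) * Complex.exp ((EuclideanGeometry.angle p 0 q : ℝ) * Complex.I))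
        = dist z q := by rw [← hfq, f.dist_map]
    rw [hd0, hd1, hd2]
  rw [← hpre, f.measurePreserving.measure_preimage
    (Gset_measurable δ (EuclideanGeometry.angle p 0 q)).nullMeasurableSet]

-- the Plane → ℂ reduction
lemma X_eq_Gvol {δ : ℝ} (hδ : 0 < δ) (o p q : Plane)
    (hp : dist p o = δ) (hq : dist q o = δ) :
    X o p q = (volume (Gset δ (EuclideanGeometry.angle p o q))).toReal := by
  set e : Plane ≃ₗᵢ[ℝ] ℂ := (Complex.isometryOfOrthonormal (EuclideanSpace.basisFun (Fin 2) ℝ)).symm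
  set m : Plane → ℂ := fun x => e (x - o) with hm
  have hmp : MeasurePreserving m volume volume :=
    e.measurePreserving.comp (measurePreserving_sub_right volume o)
  have hdist : ∀ x y : Plane, dist (m x) (m y) = dist x y := by
    intro x y
    rw [hm]
    simp only
    rw [e.dist_map, dist_sub_right]
  have hball : ∀ (x : Plane) (r : ℝ), D x r = m ⁻¹' (Metric.closedBall (m x) r) := by
    intro x r
    ext z
    simp only [D, mem_preimage, Metric.mem_closedBall, hdist]
  have hmo : m o = 0 := by rw [hm]; simp
  have habs : ∀ x : Plane, ‖m x‖ = dist x o := by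
    intro x
    rw [← sub_zero (m x), ← dist_eq_norm, ← hmo, hdist]
  have hangle : EuclideanGeometry.angle (m p) 0 (m q) = EuclideanGeometry.angle p o q := by
    rw [angle_zero_eq, hm]
    simp only
    have h2 : EuclideanGeometry.angle p o q = InnerProductGeometry.angle (p - o) (q - o) := by
      rw [EuclideanGeometry.angle, vsub_eq_sub, vsub_eq_sub]
    rw [h2]
    exact e.toLinearIsometry.angle_map (p - o) (q - o)
  have hXv : X o p q = (volume (Metric.closedBall (0:ℂ) 1 \
      (Metric.closedBall (m p) 1 ∪ Metric.closedBall (m q) 1))).toReal := by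
    rw [X, hball o 1, hball p 1, hball q 1, hmo, ← preimage_union, ← preimage_diff]
    rw [hmp.measure_preimage
      ((measurableSet_closedBall.diff
        (measurableSet_closedBall.union measurableSet_closedBall)).nullMeasurableSet)]
  rw [hXv, cvol_eq hδ (by rw [habs p, hp]) (by rw [habs q, hq]), hangle]


/-- For points on the circle of radius `δ` (`0 < δ < 1`) centered at `o`, the
omitted area `X(p,q)` is a decreasing function of the angle `∠ p o q`. -/
theorem omitted_area_anti_angle (o : Plane) (δ : ℝ) (hδ0 : 0 < δ) (hδ1 : δ < 1)
    (p₁ q₁ p₂ q₂ : Plane)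
    (hp₁ : dist p₁ o = δ) (hq₁ : dist q₁ o = δ) (hp₂ : dist p₂ o = δ) (hq₂ : dist q₂ o = δ)
    (hangle : EuclideanGeometry.angle p₁ o q₁ ≤ EuclideanGeometry.angle p₂ o q₂) :
    X o p₂ q₂ ≤ X o p₁ q₁ := by
  rw [X_eq_Gvol hδ0 o p₁ q₁ hp₁ hq₁, X_eq_Gvol hδ0 o p₂ q₂ hp₂ hq₂]
  have fin : ∀ θ : ℝ, volume (Gset δ θ) ≠ ⊤ := fun θ =>
    ((measure_mono diff_subset).trans_lt
      ((isCompact_closedBall (0:ℂ) 1).measure_lt_top)).ne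
  apply ENNReal.toReal_mono (fin _)
  exact Gvol_mono hδ0 (EuclideanGeometry.angle_nonneg _ _ _) hangle
    (EuclideanGeometry.angle_le_pi _ _ _)
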